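/- The R2 indicator of the convex Pareto front {(t, (1−√t)²) : t ∈ [0,1]} equals (3π − 8)/16. -/

import Mathlib

open Real

noncomputable def gg (w : ℝ) : ℝ := w * (1 - w) / (1 + 2 * Real.sqrt (w * (1 - w)))

noncomputable def FF (w : ℝ) : ℝ :=
  (2*w-1) * Real.sqrt (w - w^2) / 8 + 3/16 * Real.arcsin (2*w-1) - w/4
    - (2*w-1) / (8*(1 + 2 * Real.sqrt (w - w^2)))

lemma sqrt_pos_denom (x : ℝ) : (0:ℝ) < 1 + 2 * Real.sqrt x := by
  have := Real.sqrt_nonneg x; linarith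

lemma gg_cont : Continuous gg := by
  apply Continuous.div
  · fun_prop
  · fun_prop
  · intro x; exact ne_of_gt (sqrt_pos_denom _)

lemma FF_cont : Continuous FF := by
  unfold FF
  have hA : Continuous fun w : ℝ => (2*w-1) * Real.sqrt (w - w^2) / 8 := by fun_prop
  have hB : Continuous fun w : ℝ => 3/16 * Real.arcsin (2*w-1) :=
    continuous_const.mul (Real.continuous_arcsin.comp (by fun_prop))
  have hC : Continuous fun w : ℝ => (2*w-1)/(8*(1 + 2 * Real.sqrt (w - w^2))) := by
    apply Continuous.div (by fun_prop) (by fun_prop)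
    intro x
    have := sqrt_pos_denom (x - x^2); positivity
  exact (((hA.add hB).sub (by fun_prop : Continuous fun w : ℝ => w/4)).sub hC)

lemma FF_deriv {w : ℝ} (hw : w ∈ Set.Ioo (0:ℝ) 1) : HasDerivAt FF (gg w) w := by
  obtain ⟨hw0, hw1⟩ := hw
  set u := Real.sqrt (w - w^2) with hu_def
  have hwpos : 0 < w - w^2 := by nlinarith
  have hu : 0 < u := Real.sqrt_pos.mpr hwpos
  have hu2 : u^2 = w - w^2 := Real.sq_sqrt hwpos.le
  -- derivative of inner polynomial
  have hinner : HasDerivAt (fun x : ℝ => x - x^2) (1 - 2*w) w := by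
    have h := ((hasDerivAt_id w).sub ((hasDerivAt_id w).pow 2))
    simp at h; exact h
  have hsqrt : HasDerivAt (fun x : ℝ => Real.sqrt (x - x^2)) ((1-2*w) / (2*u)) w :=
    hinner.sqrt (by positivity)
  have hlin : HasDerivAt (fun x : ℝ => 2*x - 1) 2 w := by
    simpa using ((hasDerivAt_id w).const_mul 2).sub_const 1
  have h1m : Real.sqrt (1 - (2*w-1)^2) = 2*u := by
    rw [show (1:ℝ) - (2*w-1)^2 = 4*(w - w^2) by ring, show (4:ℝ)*(w-w^2) = 2^2*(w-w^2) by norm_num,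
      Real.sqrt_mul (by positivity), Real.sqrt_sq (by norm_num)]
  have harcsin : HasDerivAt (fun x : ℝ => Real.arcsin (2*x-1)) (1/u) w := by
    have hne1 : (2*w-1 : ℝ) ≠ -1 := by intro h; nlinarith
    have hne2 : (2*w-1 : ℝ) ≠ 1 := by intro h; nlinarith
    have := (Real.hasDerivAt_arcsin hne1 hne2).comp w hlin
    simp only [Function.comp_def] at this
    refine this.congr_deriv ?_
    rw [h1m]; field_simp
  have hden : HasDerivAt (fun x : ℝ => 8*(1 + 2 * Real.sqrt (x - x^2)))
      (8*(2*((1-2*w)/(2*u)))) w := by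
    exact (((hsqrt.const_mul 2).const_add 1).const_mul 8)
  have hdenne : 8*(1 + 2*u) ≠ 0 := by positivity
  have hfrac : HasDerivAt (fun x : ℝ => (2*x-1) / (8*(1 + 2 * Real.sqrt (x - x^2))))
      ((2 * (8*(1+2*u)) - (2*w-1) * (8*(2*((1-2*w)/(2*u))))) / (8*(1+2*u))^2) w :=
    hlin.div hden hdenne
  have hF : HasDerivAt FF
      ((((1-2*w)/(2*u)) * (2*w-1) + u * 2) / 8 + 3/16 * (1/u) - 1/4
        - (2 * (8*(1+2*u)) - (2*w-1) * (8*(2*((1-2*w)/(2*u))))) / (8*(1+2*u))^2) w := by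
    have h1 : HasDerivAt (fun x : ℝ => (2*x-1) * Real.sqrt (x - x^2) / 8)
        ((((1-2*w)/(2*u)) * (2*w-1) + u * 2) / 8) w := by
      have := (hlin.mul hsqrt).div_const 8
      refine this.congr_deriv ?_
      rw [← hu_def]
      ring
    have h2 : HasDerivAt (fun x : ℝ => 3/16 * Real.arcsin (2*x-1)) (3/16 * (1/u)) w :=
      harcsin.const_mul (3/16)
    have h3 : HasDerivAt (fun x : ℝ => x/4) (1/4 : ℝ) w := by
      simpa using (hasDerivAt_id w).div_const 4
    exact ((h1.add h2).sub h3).sub hfrac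
  convert hF using 1
  have hgg : gg w = u^2 / (1 + 2*u) := by
    unfold gg
    rw [show w * (1-w) = w - w^2 by ring, ← hu_def, hu2]
  have hA : (1-2*w)/(2*u)*(2*w-1) = (4*u^2-1)/(2*u) := by
    rw [hu2]; field_simp; ring
  have hB : (2*w-1) * (8*(2*((1-2*w)/(2*u)))) = (4*u^2-1)*8/u := by
    rw [hu2]; field_simp; ring
  rw [hgg, hA, hB]
  have h12u : (0:ℝ) < 1 + 2*u := by linarith
  field_simp
  ring

set_option maxHeartbeats 1000000 in
lemma inf_eq {w : ℝ} (hw : w ∈ Set.Icc (0:ℝ) 1) :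
    (⨅ t : Set.Icc (0:ℝ) 1, max (w * (t : ℝ)) ((1 - w) * (1 - Real.sqrt (t : ℝ))^2)) = gg w := by
  obtain ⟨hw0, hw1⟩ := hw
  set a := Real.sqrt w with ha_def
  set b := Real.sqrt (1 - w) with hb_def
  have ha0 : 0 ≤ a := Real.sqrt_nonneg _
  have hb0 : 0 ≤ b := Real.sqrt_nonneg _
  have ha2 : a^2 = w := Real.sq_sqrt hw0
  have hb2 : b^2 = 1 - w := Real.sq_sqrt (by linarith)
  have hsum : a^2 + b^2 = 1 := by rw [ha2, hb2]; ring
  have hD : 0 < a + b := by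
    rcases lt_or_eq_of_le (add_nonneg ha0 hb0) with h | h
    · exact h
    · exfalso
      have ha' : a = 0 := by linarith
      have hb' : b = 0 := by linarith
      rw [ha', hb'] at hsum; norm_num at hsum
  set s₀ : ℝ := b / (a + b) with hs0_def
  have hs00 : 0 ≤ s₀ := div_nonneg hb0 hD.le
  have hs01 : s₀ ≤ 1 := by
    rw [hs0_def, div_le_one hD]; linarith
  have h1s : 1 - s₀ = a / (a + b) := by
    rw [hs0_def]; field_simp; ring
  set v : ℝ := w * s₀^2 with hv_def
  have hkey : (1 - w) * (1 - s₀)^2 = v := by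
    rw [hv_def, h1s, hs0_def, ← hb2, ← ha2]
    field_simp
  have hggv : gg w = v := by
    unfold gg
    have hab : Real.sqrt (w * (1-w)) = a * b := by
      rw [ha_def, hb_def, ← Real.sqrt_mul hw0]
    rw [hab, hv_def, hs0_def]
    have hD2 : (a+b)^2 = 1 + 2*(a*b) := by nlinarith
    rw [← hD2, ← hb2]
    field_simp
  -- bound below
  have hbound : ∀ t : Set.Icc (0:ℝ) 1,
      v ≤ max (w * (t : ℝ)) ((1 - w) * (1 - Real.sqrt (t : ℝ))^2) := by
    rintro ⟨t, ht0, ht1⟩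
    show v ≤ max (w * t) ((1 - w) * (1 - Real.sqrt t)^2)
    set s := Real.sqrt t with hs_def
    have hs0 : 0 ≤ s := Real.sqrt_nonneg _
    have hst : s^2 = t := Real.sq_sqrt ht0
    rcases le_total s₀ s with h | h
    · refine le_max_of_le_left ?_
      rw [hv_def, ← hst]
      have : s₀^2 ≤ s^2 := by nlinarith
      nlinarith
    · refine le_max_of_le_right ?_
      rw [← hkey]
      have h1 : 0 ≤ 1 - s₀ := by linarith
      have : (1-s₀)^2 ≤ (1-s)^2 := by nlinarith
      nlinarith
  rw [hggv]
  refine le_antisymm ?_ (le_ciInf hbound)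
  have ht0mem : s₀^2 ∈ Set.Icc (0:ℝ) 1 := ⟨by positivity, by nlinarith⟩
  have hattain : max (w * s₀^2) ((1 - w) * (1 - Real.sqrt (s₀^2))^2) = v := by
    rw [Real.sqrt_sq hs00, hkey, hv_def, max_self]
  calc (⨅ t : Set.Icc (0:ℝ) 1, max (w * (t : ℝ)) ((1 - w) * (1 - Real.sqrt (t : ℝ))^2))
      ≤ max (w * s₀^2) ((1 - w) * (1 - Real.sqrt (s₀^2))^2) := by
        exact ciInf_le ⟨v, by rintro x ⟨t, rfl⟩; exact hbound t⟩ (⟨s₀^2, ht0mem⟩ : Set.Icc (0:ℝ) 1)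
    _ = v := hattain

theorem r2_convex_front :
    (∫ w in (0:ℝ)..1,
        ⨅ t : Set.Icc (0:ℝ) 1, max (w * (t : ℝ)) ((1 - w) * (1 - Real.sqrt (t : ℝ))^2))
      = (3 * Real.pi - 8) / 16 := by
  have hcong : (∫ w in (0:ℝ)..1,
        ⨅ t : Set.Icc (0:ℝ) 1, max (w * (t : ℝ)) ((1 - w) * (1 - Real.sqrt (t : ℝ))^2))
      = ∫ w in (0:ℝ)..1, gg w := by
    apply intervalIntegral.integral_congr
    intro w hw
    rw [Set.uIcc_of_le (by norm_num : (0:ℝ) ≤ 1)] at hw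
    exact inf_eq hw
  rw [hcong]
  have hftc : ∫ w in (0:ℝ)..1, gg w = FF 1 - FF 0 := by
    apply intervalIntegral.integral_eq_sub_of_hasDeriv_right_of_le (by norm_num)
      (FF_cont.continuousOn)
    · intro x hx
      exact (FF_deriv hx).hasDerivWithinAt
    · exact gg_cont.intervalIntegrable 0 1
  rw [hftc]
  unfold FF
  have h1 : Real.sqrt ((1:ℝ) - 1^2) = 0 := by norm_num
  have h0 : Real.sqrt ((0:ℝ) - 0^2) = 0 := by norm_num
  rw [show (2*(1:ℝ)-1) = 1 by norm_num, show (2*(0:ℝ)-1) = -1 by norm_num]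
  norm_num [h1, h0, Real.arcsin_one, Real.arcsin_neg, Real.arcsin_one]
  ring
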